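/- Let F=(f₁,…,fₙ):ℝⁿ→ℝⁿ be a polynomial map satisfying F(0)=0 and det DF(x)≠0 for all x∈ℝⁿ, let H(x)=‖F(x)‖₂²/2, and let Y=(−∂H/∂x₁,…,−∂H/∂xₙ). Let s=(s₁,…,sₙ) be a weight vector of positive integers and H_s the higher s-quasi-homogeneous term of H. If the gradient ∂ₓH_s=(∂H_s/∂x₁,…,∂H_s/∂xₙ) vanishes only at the origin in ℝⁿ, then no partial derivative ∂H_s/∂xᵢ is the zero polynomial, the higher s-quasi-homogeneous part of the vector field Y equals (−∂H_s/∂x₁,…,−∂H_s/∂xₙ), and in particular the higher s-quasi-homogeneous part of Y vanishes only at the origin in ℝⁿ. -/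

import Mathlib

open MvPolynomial Filter

noncomputable def evalMap {n : ℕ} (F : Fin n → MvPolynomial (Fin n) ℝ) (x : Fin n → ℝ) :
    Fin n → ℝ := fun i => eval x (F i)

noncomputable def jacDet {n : ℕ} (F : Fin n → MvPolynomial (Fin n) ℝ) (x : Fin n → ℝ) : ℝ :=
  Matrix.det (Matrix.of fun i j => eval x (pderiv j (F i)))

/-- The higher `s`-quasi-homogeneous term of a polynomial. -/
noncomputable def higherPart {n : ℕ} (s : Fin n → ℕ) (P : MvPolynomial (Fin n) ℝ) :
    MvPolynomial (Fin n) ℝ :=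
  weightedHomogeneousComponent s (weightedTotalDegree s P) P

/-- The polynomial `H = ‖F‖₂²/2 = (f₁² + ⋯ + fₙ²)/2`. -/
noncomputable def polyH {n : ℕ} (F : Fin n → MvPolynomial (Fin n) ℝ) :
    MvPolynomial (Fin n) ℝ :=
  C (1 / 2 : ℝ) * ∑ i, F i ^ 2

/-- The gradient vector field `Y = (-∂H/∂x₁, …, -∂H/∂xₙ)` as a tuple of polynomials. -/
noncomputable def gradField {n : ℕ} (F : Fin n → MvPolynomial (Fin n) ℝ) :
    Fin n → MvPolynomial (Fin n) ℝ :=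
  fun i => - pderiv i (polyH F)

section AuxLemmas

variable {n : ℕ}

private lemma coeff_pderiv' (i : Fin n) (p : MvPolynomial (Fin n) ℝ) (m : Fin n →₀ ℕ) :
    coeff m (pderiv i p) = ((m i : ℝ) + 1) * coeff (m + Finsupp.single i 1) p := by
  classical
  induction p using MvPolynomial.induction_on' with
  | monomial s a =>
      rw [pderiv_monomial]
      by_cases h : s = m + Finsupp.single i 1
      · subst h
        have h1 : (m + Finsupp.single i 1) - Finsupp.single i 1 = m := by
          ext k; simp [Finsupp.tsub_apply]
        have h2 : ((m + Finsupp.single i 1 : Fin n →₀ ℕ)) i = m i + 1 := by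
          rw [Finsupp.add_apply, Finsupp.single_apply, if_pos rfl]
        rw [h1, coeff_monomial, if_pos rfl, coeff_monomial, if_pos rfl, h2]
        push_cast
        ring
      · rw [coeff_monomial, coeff_monomial, if_neg h, mul_zero]
        by_cases hsi : s i = 0
        · split_ifs with h2
          · simp [hsi]
          · rfl
        · have h2 : ¬(s - Finsupp.single i 1 = m) := by
            intro h2
            apply h
            have hk : ∀ k, s k - Finsupp.single i 1 k = m k := fun k => by
              rw [← Finsupp.tsub_apply, h2]
            ext k
            have := hk k
            rw [Finsupp.add_apply]
            rcases eq_or_ne i k with hik | hik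
            · subst hik
              rw [Finsupp.single_apply, if_pos rfl] at this ⊢
              omega
            · rw [Finsupp.single_apply, if_neg hik] at this ⊢
              omega
          rw [if_neg h2]
  | add p q hp hq => simp only [map_add, coeff_add, hp, hq]; ring

private lemma pderiv_comm' (i j : Fin n) (p : MvPolynomial (Fin n) ℝ) :
    pderiv i (pderiv j p) = pderiv j (pderiv i p) := by
  apply MvPolynomial.ext
  intro m
  rw [coeff_pderiv', coeff_pderiv', coeff_pderiv', coeff_pderiv']
  have hcomm : m + Finsupp.single i 1 + Finsupp.single j 1
      = m + Finsupp.single j 1 + Finsupp.single i 1 := by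
    rw [add_assoc, add_assoc, add_comm (Finsupp.single i 1)]
  rw [hcomm]
  rcases eq_or_ne i j with h | h
  · subst h; ring
  · have h1 : ((m + Finsupp.single i 1 : Fin n →₀ ℕ)) j = m j := by
      rw [Finsupp.add_apply, Finsupp.single_apply, if_neg h, add_zero]
    have h2 : ((m + Finsupp.single j 1 : Fin n →₀ ℕ)) i = m i := by
      rw [Finsupp.add_apply, Finsupp.single_apply, if_neg (Ne.symm h), add_zero]
    rw [h1, h2]
    ring

private lemma coord_zero_of_pderiv_eq_zero {p : MvPolynomial (Fin n) ℝ} {i : Fin n}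
    (h : pderiv i p = 0) : ∀ m, coeff m p ≠ 0 → m i = 0 := by
  intro m hm
  by_contra hmi
  have hrep : m = (m - Finsupp.single i 1) + Finsupp.single i 1 := by
    ext k
    rw [Finsupp.add_apply, Finsupp.tsub_apply]
    rcases eq_or_ne i k with hik | hik
    · subst hik
      rw [Finsupp.single_apply, if_pos rfl]
      omega
    · rw [Finsupp.single_apply, if_neg hik]
      omega
  have hc := coeff_pderiv' i p (m - Finsupp.single i 1)
  rw [h, coeff_zero, ← hrep] at hc
  have hne : ((((m - Finsupp.single i 1 : Fin n →₀ ℕ)) i : ℝ) + 1) ≠ 0 := by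
    have h0 : (0 : ℝ) ≤ (((m - Finsupp.single i 1 : Fin n →₀ ℕ)) i : ℝ) := Nat.cast_nonneg _
    linarith
  rcases mul_eq_zero.mp hc.symm with h' | h'
  · exact hne h'
  · exact hm h'

private lemma eval_single_of_pderiv_eq_zero {p : MvPolynomial (Fin n) ℝ} {i : Fin n}
    (h : pderiv i p = 0) (c : ℝ) :
    eval (Pi.single i c : Fin n → ℝ) p = constantCoeff p := by
  have hv : i ∉ p.vars := by
    intro hiv
    rw [mem_vars] at hiv
    obtain ⟨d, hd, hi⟩ := hiv
    exact (Finsupp.mem_support_iff.mp hi)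
      (coord_zero_of_pderiv_eq_zero h d (mem_support_iff.mp hd))
  have hzero : ∀ k ∈ p.vars, (Pi.single i c : Fin n → ℝ) k = 0 := by
    intro k hk
    have hki : k ≠ i := by rintro rfl; exact hv hk
    exact Pi.single_eq_of_ne (M := fun _ => ℝ) hki c
  have key := eval₂Hom_eq_constantCoeff_of_vars (p := p) (RingHom.id ℝ)
    (g := (Pi.single i c : Fin n → ℝ)) hzero
  simpa using key

private lemma isWH_pderiv {s : Fin n → ℕ} {p : MvPolynomial (Fin n) ℝ} {ℓ : ℕ}
    (hp : IsWeightedHomogeneous s p ℓ) (i : Fin n) :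
    IsWeightedHomogeneous s (pderiv i p) (ℓ - s i) := by
  intro m hm
  rw [coeff_pderiv'] at hm
  have h2 : coeff (m + Finsupp.single i 1) p ≠ 0 := right_ne_zero_of_mul hm
  have h3 := hp h2
  rw [map_add] at h3
  have h4 : Finsupp.weight s (Finsupp.single i 1) = s i := by
    simp [Finsupp.weight_apply, Finsupp.sum_single_index]
  rw [h4] at h3
  omega

private lemma add_eq_single_one {a b : Fin n →₀ ℕ} {j : Fin n}
    (h : a + b = Finsupp.single j 1) : a = 0 ∨ b = 0 := by
  have hk : ∀ k, a k + b k = Finsupp.single j 1 k := fun k => by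
    rw [← Finsupp.add_apply, h]
  by_cases haj : a j = 0
  · left
    ext k
    have h1 := hk k
    rw [Finsupp.single_apply] at h1
    simp only [Finsupp.coe_zero, Pi.zero_apply]
    rcases eq_or_ne j k with hjk | hjk
    · subst hjk; rw [if_pos rfl] at h1; omega
    · rw [if_neg hjk] at h1; omega
  · right
    ext k
    have h1 := hk k
    rw [Finsupp.single_apply] at h1
    simp only [Finsupp.coe_zero, Pi.zero_apply]
    rcases eq_or_ne j k with hjk | hjk
    · subst hjk; rw [if_pos rfl] at h1; omega
    · rw [if_neg hjk] at h1; omega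

private lemma higherPart_neg (s : Fin n → ℕ) (Q : MvPolynomial (Fin n) ℝ) :
    higherPart s (-Q) = - higherPart s Q := by
  unfold higherPart
  have hdeg : weightedTotalDegree s (-Q) = weightedTotalDegree s Q := by
    unfold weightedTotalDegree
    rw [support_neg]
  rw [hdeg, map_neg]

end AuxLemmas

/-- if the gradient of the higher `s`-quasi-homogeneous term `H_s` of
`H` vanishes only at the origin, then no `∂H_s/∂xᵢ` is the zero polynomial, the higher
`s`-quasi-homogeneous part of `Y = -∇H` equals `-∇H_s`, and in particular it vanishes
only at the origin. -/
theorem stmt6 {n : ℕ} (F : Fin n → MvPolynomial (Fin n) ℝ)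
    (h0 : ∀ i, eval (0 : Fin n → ℝ) (F i) = 0)
    (hdet : ∀ x : Fin n → ℝ, jacDet F x ≠ 0)
    (s : Fin n → ℕ) (hs : ∀ i, 0 < s i)
    (hgrad : ∀ x : Fin n → ℝ,
      (∀ i, eval x (pderiv i (higherPart s (polyH F))) = 0) → x = 0) :
    (∀ i, pderiv i (higherPart s (polyH F)) ≠ 0) ∧
    (∀ i, higherPart s (gradField F i) = - pderiv i (higherPart s (polyH F))) ∧
    (∀ x : Fin n → ℝ, (∀ i, eval x (higherPart s (gradField F i)) = 0) → x = 0) := by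
  classical
  set H := polyH F with hH
  set d := weightedTotalDegree s H with hd
  have hHsEq : higherPart s H = weightedHomogeneousComponent s d H := rfl
  set Hs := higherPart s H with hHs
  have hWH : IsWeightedHomogeneous s Hs d := by
    rw [hHsEq]
    exact weightedHomogeneousComponent_isWeightedHomogeneous d H
  -- constant coefficients of the `F i` vanish
  have hF0 : ∀ i, constantCoeff (F i) = 0 := fun i => by
    rw [← eval_zero]; exact h0 i
  -- linear coefficients of `H` vanish
  have hA1 : ∀ j : Fin n, coeff (Finsupp.single j 1) H = 0 := by
    intro j
    rw [hH]
    unfold polyH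
    rw [coeff_C_mul, coeff_sum]
    rw [Finset.sum_eq_zero, mul_zero]
    intro i _
    rw [sq, coeff_mul]
    apply Finset.sum_eq_zero
    intro x hx
    rw [Finset.HasAntidiagonal.mem_antidiagonal] at hx
    have hc0 : coeff (0 : Fin n →₀ ℕ) (F i) = 0 := by
      rw [← constantCoeff_eq]
      exact hF0 i
    rcases add_eq_single_one hx with h' | h'
    · rw [h', hc0, zero_mul]
    · rw [h', hc0, mul_zero]
  have hA1s : ∀ j : Fin n, coeff (Finsupp.single j 1) Hs = 0 := by
    intro j
    rw [hHsEq, coeff_weightedHomogeneousComponent]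
    split_ifs with hw
    · exact hA1 j
    · rfl
  -- gradient of `Hs` vanishes at the origin
  have hgrad0 : ∀ j : Fin n, constantCoeff (pderiv j Hs) = 0 := by
    intro j
    rw [constantCoeff_eq, coeff_pderiv']
    simp [hA1s j]
  -- Claim 1
  have claim1 : ∀ i, pderiv i Hs ≠ 0 := by
    intro i hz
    have hxne : (Pi.single i 1 : Fin n → ℝ) ≠ 0 := by
      intro h
      have := congrFun h i
      simp at this
    apply hxne
    apply hgrad
    intro j
    have hcomm : pderiv i (pderiv j Hs) = 0 := by
      rw [pderiv_comm', hz, map_zero]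
    rw [eval_single_of_pderiv_eq_zero hcomm, hgrad0 j]
  -- Claim 2
  have claim2 : ∀ i, higherPart s (gradField F i) = - pderiv i Hs := by
    intro i
    have hne := claim1 i
    obtain ⟨m₀, hm₀⟩ := exists_coeff_ne_zero hne
    have hm₀' : coeff (m₀ + Finsupp.single i 1) Hs ≠ 0 := by
      rw [coeff_pderiv'] at hm₀
      exact right_ne_zero_of_mul hm₀
    have hwsingle : Finsupp.weight s (Finsupp.single i 1) = s i := by
      simp [Finsupp.weight_apply, Finsupp.sum_single_index]
    have hdsi : s i ≤ d := by
      have h1 := hWH hm₀'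
      rw [map_add, hwsingle] at h1
      omega
    have hWHd : IsWeightedHomogeneous s (pderiv i Hs) (d - s i) := isWH_pderiv hWH i
    have hagree : ∀ m : Fin n →₀ ℕ, Finsupp.weight s m = d - s i →
        coeff m (pderiv i H) = coeff m (pderiv i Hs) := by
      intro m hm
      rw [coeff_pderiv', coeff_pderiv']
      congr 1
      rw [hHsEq, coeff_weightedHomogeneousComponent, if_pos]
      rw [map_add, hm, hwsingle]
      omega
    have hsupp : ∀ m : Fin n →₀ ℕ, coeff m (pderiv i H) ≠ 0 →
        Finsupp.weight s m ≤ d - s i := by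
      intro m hm
      rw [coeff_pderiv'] at hm
      have h2 := right_ne_zero_of_mul hm
      have h3 : Finsupp.weight s (m + Finsupp.single i 1) ≤ d :=
        le_weightedTotalDegree s (mem_support_iff.mpr h2)
      rw [map_add, hwsingle] at h3
      omega
    have hm₀w : Finsupp.weight s m₀ = d - s i := hWHd hm₀
    have hD : weightedTotalDegree s (pderiv i H) = d - s i := by
      apply le_antisymm
      · apply Finset.sup_le
        intro m hm
        exact hsupp m (mem_support_iff.mp hm)
      · have hmem : m₀ ∈ (pderiv i H).support := by
          rw [mem_support_iff, hagree m₀ hm₀w]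
          exact hm₀
        calc d - s i = Finsupp.weight s m₀ := hm₀w.symm
          _ ≤ _ := le_weightedTotalDegree s hmem
    have key : higherPart s (pderiv i H) = pderiv i Hs := by
      unfold higherPart
      rw [hD]
      apply MvPolynomial.ext
      intro m
      rw [coeff_weightedHomogeneousComponent]
      split_ifs with hw
      · exact hagree m hw
      · exact (hWHd.coeff_eq_zero m hw).symm
    show higherPart s (-(pderiv i H)) = - pderiv i Hs
    rw [higherPart_neg, key]
  refine ⟨claim1, claim2, ?_⟩
  intro x hx
  apply hgrad
  intro i
  have hxi := hx i
  rw [claim2 i] at hxi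
  simpa using hxi
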